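/- For each integer l ≤ −1, define the operator T_l on L²([0,1], r dr) by (T_l f)(s) = −(∑_{n=0}^{−l} s^{2n}) ∫₀^s (r/s)^{1−l} f(r) dr + (1/(1−s²)) ∫_s^1 (rs)^{1−l} f(r) dr for 0 < s < 1. Then ∫₀¹ |(T_l f)(s)|² s ds ≤ 25 ∫₀¹ |f(r)|² r dr for all f ∈ L²([0,1], r dr), with the bound independent of l. -/

import Mathlib

open MeasureTheory

/-- The operator `T_l`, `l ≤ −1`, of Lemma 3. -/
noncomputable def Tl (l : ℤ) (f : ℝ → ℂ) (s : ℝ) : ℂ :=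
  -((∑ n ∈ Finset.range ((-l).toNat + 1), (s:ℂ) ^ (2 * n)) *
      ∫ r in Set.Ioc (0:ℝ) s, ((r / s : ℝ) : ℂ) ^ ((1 - l).toNat) * f r) +
    (1 / (1 - (s:ℂ) ^ 2)) *
      ∫ r in Set.Ioc s 1, ((r * s : ℝ) : ℂ) ^ ((1 - l).toNat) * f r

namespace TlAux

open Set ENNReal Filter

noncomputable def h0 (x : ℝ) : ℝ := (Real.sqrt x)⁻¹ * (Real.sqrt (1-x))⁻¹

noncomputable def hinv (x : ℝ) : ℝ := Real.sqrt x * Real.sqrt (1-x)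

/-- dominating kernel -/
noncomputable def Khat (s r : ℝ) : ℝ≥0∞ :=
  if r ≤ s then ENNReal.ofReal (2*(r/s)/(1-r)) else ENNReal.ofReal (r^2*s^2/(1-s^2))


lemma h0_nonneg (x : ℝ) : 0 ≤ h0 x := mul_nonneg (by positivity) (by positivity)

lemma hinv_nonneg (x : ℝ) : 0 ≤ hinv x := mul_nonneg (Real.sqrt_nonneg _) (Real.sqrt_nonneg _)

lemma measurable_h0 : Measurable h0 := by unfold h0; fun_prop

lemma measurable_hinv : Measurable hinv := by unfold hinv; fun_prop

lemma measurable_Khat_r (s : ℝ) : Measurable (fun r => Khat s r) := by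
  unfold Khat
  exact Measurable.ite measurableSet_Iic (by fun_prop) (by fun_prop)

lemma measurable_Khat_pair : Measurable (fun p : ℝ × ℝ => Khat p.1 p.2) := by
  unfold Khat
  exact Measurable.ite (measurableSet_le measurable_snd measurable_fst) (by fun_prop) (by fun_prop)

lemma h0_mul_hinv {r : ℝ} (hr : r ∈ Set.Ioo (0:ℝ) 1) : h0 r * hinv r = 1 := by
  unfold h0 hinv
  have h1 : Real.sqrt r ≠ 0 := (Real.sqrt_pos.2 hr.1).ne'
  have h2 : Real.sqrt (1-r) ≠ 0 := (Real.sqrt_pos.2 (by linarith [hr.2])).ne'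
  field_simp

lemma ae_Ioo : ∀ᵐ x ∂(volume.restrict (Set.Ioc (0:ℝ) 1)), x ∈ Set.Ioo (0:ℝ) 1 := by
  have h1 : (volume.restrict (Set.Ioc (0:ℝ) 1)) {(1:ℝ)} = 0 :=
    le_antisymm ((Measure.restrict_le_self _).trans_eq Real.volume_singleton) zero_le
  have h2 : ∀ᵐ x ∂(volume.restrict (Set.Ioc (0:ℝ) 1)), x ≠ 1 := by
    rw [ae_iff]; simpa using h1
  filter_upwards [ae_restrict_mem measurableSet_Ioc, h2] with x hx hne
  exact ⟨hx.1, lt_of_le_of_ne hx.2 hne⟩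

lemma aux_pow (k : ℕ) {r : ℝ} (h0 : 0 ≤ r) (h1 : r ≤ 1) :
    (k:ℝ) * r^k * (1-r) ≤ 1 := by
  set x : ℝ := k * (1-r) with hx
  have hx0 : 0 ≤ x := mul_nonneg (Nat.cast_nonneg k) (by linarith)
  have hrk : r ^ k ≤ Real.exp (-x) := by
    have h2 : r ≤ Real.exp (r - 1) := by
      have := Real.add_one_le_exp (r - 1); linarith
    calc r ^ k ≤ (Real.exp (r-1)) ^ k := pow_le_pow_left₀ h0 h2 k
      _ = Real.exp (k * (r-1)) := by rw [← Real.exp_nat_mul]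
      _ = Real.exp (-x) := by rw [hx]; ring_nf
  have hxe : x * Real.exp (-x) ≤ 1 := by
    have h3 : x ≤ Real.exp x := (Real.add_one_le_exp x).trans' (by linarith)
    have h4 : Real.exp (-x) = (Real.exp x)⁻¹ := by
      rw [Real.exp_neg]
    rw [h4]
    have hexp : 0 < Real.exp x := Real.exp_pos x
    rw [mul_inv_le_iff₀ hexp, one_mul]
    exact h3
  calc (k:ℝ) * r^k * (1-r) = x * r^k := by rw [hx]; ring
    _ ≤ x * Real.exp (-x) := by
        apply mul_le_mul_of_nonneg_left hrk hx0
    _ ≤ 1 := hxe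

lemma kernel1_bound {m : ℕ} (hm : 2 ≤ m) {r s : ℝ} (hr : 0 < r) (hrs : r ≤ s) (hs1 : s < 1) :
    (∑ n ∈ Finset.range m, s ^ (2*n)) * (r/s)^m ≤ 2*(r/s)/(1-r) := by
  have hs0 : 0 < s := lt_of_lt_of_le hr hrs
  have hr1 : r < 1 := lt_of_le_of_lt hrs hs1
  have h1r : (0:ℝ) < 1 - r := by linarith
  have hq0 : 0 < r/s := div_pos hr hs0
  have hq1 : r/s ≤ 1 := (div_le_one hs0).2 hrs
  have hterm : ∀ n ∈ Finset.range m, s^(2*n) * (r/s)^m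
      ≤ (r/s) * (r^(2*n) + (if m ≤ 2*n then r^(m-1) else 0)) := by
    intro n _
    rcases le_or_gt m (2*n) with h | h
    · rw [if_pos h]
      have h1 : s^(2*n) * (r/s)^m ≤ s^m * (r/s)^m := by
        apply mul_le_mul_of_nonneg_right (pow_le_pow_of_le_one hs0.le hs1.le h)
          (pow_nonneg hq0.le m)
      have h2 : s^m * (r/s)^m = r^m := by
        rw [← mul_pow, mul_div_cancel₀ _ (ne_of_gt hs0)]
      have h3 : r^m = r^(m-1) * r := by
        rw [← pow_succ]; congr 1; omega
      have h4 : r ≤ r / s := by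
        calc r = r / 1 := (div_one r).symm
          _ ≤ r / s := by
            apply div_le_div_of_nonneg_left hr.le hs0 hs1.le
      have h5 : r^(m-1) * r ≤ (r/s) * r^(m-1) := by
        rw [mul_comm]
        exact mul_le_mul_of_nonneg_right h4 (pow_nonneg hr.le _)
      have h6 : (r/s) * r^(m-1) ≤ (r/s) * (r^(2*n) + r^(m-1)) := by
        apply mul_le_mul_of_nonneg_left _ hq0.le
        nlinarith [pow_nonneg hr.le (2*n)]
      linarith [h1, h2 ▸ h1]
    · rw [if_neg (by omega)]
      have key : s^(2*n) * (r/s)^m = r^(2*n) * (r/s)^(m-2*n) := by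
        have hsplit : (r/s)^m = (r/s)^(2*n) * (r/s)^(m-2*n) := by
          rw [← pow_add]; congr 1; omega
        rw [hsplit, ← mul_assoc, ← mul_pow, mul_div_cancel₀ _ (ne_of_gt hs0)]
      rw [key]
      have h1 : (r/s)^(m-2*n) ≤ r/s := by
        calc (r/s)^(m-2*n) ≤ (r/s)^1 := pow_le_pow_of_le_one hq0.le hq1 (by omega)
          _ = r/s := pow_one _
      calc r^(2*n) * (r/s)^(m-2*n) ≤ r^(2*n) * (r/s) :=
            mul_le_mul_of_nonneg_left h1 (pow_nonneg hr.le _)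
        _ = (r/s) * (r^(2*n) + 0) := by ring
        _ ≤ (r/s) * (r^(2*n) + 0) := le_rfl
  have hsum := Finset.sum_le_sum hterm
  rw [← Finset.sum_mul] at hsum
  have hgeom : ∑ n ∈ Finset.range m, r^(2*n) ≤ 1/(1-r) := by
    have hrw : ∀ n ∈ Finset.range m, r^(2*n) = (r^2)^n := fun n _ => by rw [pow_mul]
    rw [Finset.sum_congr rfl hrw]
    have hS := geom_sum_mul (r^2) m
    set S := ∑ n ∈ Finset.range m, (r^2)^n with hSdef
    have hS0 : 0 ≤ S := Finset.sum_nonneg fun n _ => by positivity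
    rw [le_div_iff₀ h1r]
    nlinarith [pow_nonneg (sq_nonneg r) m, mul_nonneg (mul_nonneg hS0 h1r.le) hr.le]
  have hif : ∑ n ∈ Finset.range m, (if m ≤ 2*n then r^(m-1) else 0) ≤ 1/(1-r) := by
    rw [← Finset.sum_filter]
    rw [Finset.sum_const, nsmul_eq_mul]
    have hcard : ((Finset.range m).filter (fun n => m ≤ 2*n)).card ≤ m - 1 := by
      have hsub : (Finset.range m).filter (fun n => m ≤ 2*n) ⊆ (Finset.range m).erase 0 := by
        intro n hn
        rw [Finset.mem_filter] at hn
        rw [Finset.mem_erase]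
        exact ⟨by omega, hn.1⟩
      calc _ ≤ ((Finset.range m).erase 0).card := Finset.card_le_card hsub
        _ = m - 1 := by rw [Finset.card_erase_of_mem (by simp [Finset.mem_range]; omega),
            Finset.card_range]
    have hap := aux_pow (m-1) hr.le hr1.le
    have hrm : 0 ≤ r^(m-1) := pow_nonneg hr.le _
    have hcard' : (((Finset.range m).filter (fun n => m ≤ 2*n)).card : ℝ) ≤ ((m-1 : ℕ) : ℝ) := by
      exact_mod_cast hcard
    rw [le_div_iff₀ h1r]
    calc ((Finset.range m).filter (fun n => m ≤ 2*n)).card * r^(m-1) * (1-r)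
        ≤ ((m-1:ℕ):ℝ) * r^(m-1) * (1-r) := by
          apply mul_le_mul_of_nonneg_right (mul_le_mul_of_nonneg_right hcard' hrm) h1r.le
      _ ≤ 1 := hap
  calc (∑ n ∈ Finset.range m, s ^ (2*n)) * (r/s)^m
      ≤ ∑ n ∈ Finset.range m, (r/s) * (r^(2*n) + (if m ≤ 2*n then r^(m-1) else 0)) := hsum
    _ = (r/s) * ((∑ n ∈ Finset.range m, r^(2*n))
          + ∑ n ∈ Finset.range m, (if m ≤ 2*n then r^(m-1) else 0)) := by
        rw [← Finset.mul_sum, Finset.sum_add_distrib]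
    _ ≤ (r/s) * (1/(1-r) + 1/(1-r)) := by
        apply mul_le_mul_of_nonneg_left (add_le_add hgeom hif) hq0.le
    _ = 2*(r/s)/(1-r) := by ring

lemma g1_nonneg (x : ℝ) : 0 ≤ ((1-x) * Real.sqrt (1-x))⁻¹ := by
  rcases le_or_gt x 1 with h | h
  · exact inv_nonneg.2 (mul_nonneg (by linarith) (Real.sqrt_nonneg _))
  · rw [Real.sqrt_eq_zero'.2 (by linarith : 1 - x ≤ 0)]
    simp

lemma hasDeriv_g1 {x : ℝ} (hx : x < 1) :
    HasDerivAt (fun y : ℝ => 2 * (Real.sqrt (1-y))⁻¹) (((1-x) * Real.sqrt (1-x))⁻¹) x := by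
  have hu : 0 < 1 - x := by linarith
  have hsq : 0 < Real.sqrt (1-x) := Real.sqrt_pos.2 hu
  have h1 : HasDerivAt (fun y : ℝ => 1 - y) (-1) x := by
    simpa using (hasDerivAt_id x).const_sub 1
  have h2 : HasDerivAt (fun y : ℝ => Real.sqrt (1-y)) (1/(2*Real.sqrt (1-x)) * (-1)) x :=
    (Real.hasDerivAt_sqrt hu.ne').comp x h1
  have h3 := (h2.inv hsq.ne').const_mul 2
  refine h3.congr_deriv ?_
  rw [Real.sq_sqrt hu.le]
  field_simp

lemma lint_g1 {b : ℝ} (hb0 : 0 ≤ b) (hb1 : b < 1) :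
    ∫⁻ x in Set.Ioc (0:ℝ) b, ENNReal.ofReal (((1-x) * Real.sqrt (1-x))⁻¹)
      ≤ ENNReal.ofReal (2 * (Real.sqrt (1-b))⁻¹) := by
  have hcont : ContinuousOn (fun x : ℝ => ((1-x) * Real.sqrt (1-x))⁻¹) (Set.Icc 0 b) := by
    apply ContinuousOn.inv₀
    · exact (continuousOn_const.sub continuousOn_id).mul
        ((continuous_const.sub continuous_id).sqrt.continuousOn)
    · intro x hx
      have : 0 < 1 - x := by
        have := hx.2; simp at this ⊢; nlinarith
      positivity
  have hInt : IntervalIntegrable (fun x : ℝ => ((1-x) * Real.sqrt (1-x))⁻¹) volume 0 b := by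
    apply ContinuousOn.intervalIntegrable
    rwa [Set.uIcc_of_le hb0]
  have hFTC : ∫ x in (0:ℝ)..b, ((1-x) * Real.sqrt (1-x))⁻¹
      = 2 * (Real.sqrt (1-b))⁻¹ - 2 * (Real.sqrt (1-0))⁻¹ := by
    apply intervalIntegral.integral_eq_sub_of_hasDerivAt
    · intro x hx
      rw [Set.uIcc_of_le hb0] at hx
      exact hasDeriv_g1 (lt_of_le_of_lt hx.2 hb1)
    · exact hInt
  have hIOn : IntegrableOn (fun x : ℝ => ((1-x) * Real.sqrt (1-x))⁻¹) (Set.Ioc 0 b) volume := by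
    rw [intervalIntegrable_iff] at hInt
    rwa [Set.uIoc_of_le hb0] at hInt
  rw [← MeasureTheory.ofReal_integral_eq_lintegral_ofReal hIOn
      (Filter.Eventually.of_forall fun x => g1_nonneg x)]
  apply ENNReal.ofReal_le_ofReal
  rw [← intervalIntegral.integral_of_le hb0, hFTC]
  have : 0 ≤ (Real.sqrt (1-0))⁻¹ := by positivity
  linarith

lemma g2_nonneg (x : ℝ) : 0 ≤ (Real.sqrt (1-x))⁻¹ := by positivity

lemma lint_g2 {a : ℝ} (ha0 : 0 ≤ a) (ha1 : a < 1) :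
    ∫⁻ x in Set.Ioc a 1, ENNReal.ofReal ((Real.sqrt (1-x))⁻¹)
      ≤ ENNReal.ofReal (2 * Real.sqrt (1-a)) := by
  have hrpow : IntervalIntegrable (fun x : ℝ => x ^ (-(1/2) : ℝ)) volume 0 (1-a) :=
    intervalIntegral.intervalIntegrable_rpow' (by norm_num)
  have hcomp := hrpow.comp_sub_left 1
  have heq : (1:ℝ) - (1 - a) = a := by ring
  rw [heq, sub_zero] at hcomp
  have hInt : IntervalIntegrable (fun x : ℝ => (Real.sqrt (1-x))⁻¹) volume a 1 := by
    rw [intervalIntegrable_iff] at hcomp ⊢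
    rw [Set.uIoc_comm] at hcomp
    apply hcomp.congr_fun _ measurableSet_uIoc
    intro x hx
    rw [Set.uIoc_of_le ha1.le] at hx
    have h1x : 0 ≤ 1 - x := by linarith [hx.2]
    rw [show (fun x : ℝ => (1 - x) ^ (-(1/2) : ℝ)) x = (1 - x) ^ (-(1/2) : ℝ) from rfl,
      Real.rpow_neg h1x, ← Real.sqrt_eq_rpow]
  have hFTC : ∫ x in a..(1:ℝ), (Real.sqrt (1-x))⁻¹
      = -(2 * Real.sqrt (1-1)) - -(2 * Real.sqrt (1-a)) := by
    apply intervalIntegral.integral_eq_sub_of_hasDeriv_right_of_le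
      (f := fun x : ℝ => -(2 * Real.sqrt (1-x))) ha1.le
    · apply Continuous.continuousOn
      exact (continuous_const.mul ((continuous_const.sub continuous_id).sqrt)).neg
    · intro x hx
      have hu : 0 < 1 - x := by linarith [hx.2]
      have hsq : 0 < Real.sqrt (1-x) := Real.sqrt_pos.2 hu
      have h1 : HasDerivAt (fun y : ℝ => 1 - y) (-1) x := by
        simpa using (hasDerivAt_id x).const_sub 1
      have h2 : HasDerivAt (fun y : ℝ => Real.sqrt (1-y)) (1/(2*Real.sqrt (1-x)) * (-1)) x :=
        (Real.hasDerivAt_sqrt hu.ne').comp x h1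
      have h3 := (h2.const_mul 2).neg
      have : -(2 * (1/(2*Real.sqrt (1-x)) * (-1))) = (Real.sqrt (1-x))⁻¹ := by
        field_simp
      rw [this] at h3
      exact h3.hasDerivWithinAt
    · exact hInt
  have hIOn : IntegrableOn (fun x : ℝ => (Real.sqrt (1-x))⁻¹) (Set.Ioc a 1) volume := by
    rw [intervalIntegrable_iff, Set.uIoc_of_le ha1.le] at hInt
    exact hInt
  rw [← MeasureTheory.ofReal_integral_eq_lintegral_ofReal hIOn
      (Filter.Eventually.of_forall fun x => g2_nonneg x)]
  apply ENNReal.ofReal_le_ofReal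
  rw [← intervalIntegral.integral_of_le ha1.le, hFTC]
  simp [Real.sqrt_eq_zero']

lemma row_bound {s : ℝ} (hs : s ∈ Set.Ioo (0:ℝ) 1) :
    ∫⁻ r in Set.Ioc (0:ℝ) 1, Khat s r * ENNReal.ofReal (h0 r)
      ≤ ENNReal.ofReal (5 * h0 s) := by
  obtain ⟨hs0, hs1⟩ := hs
  have hsq : (0:ℝ) < Real.sqrt s := Real.sqrt_pos.2 hs0
  have hsq1 : (0:ℝ) < Real.sqrt (1-s) := Real.sqrt_pos.2 (by linarith)
  rw [← Set.Ioc_union_Ioc_eq_Ioc hs0.le hs1.le,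
    lintegral_union measurableSet_Ioc (Set.Ioc_disjoint_Ioc_of_le le_rfl)]
  have piece1 : ∫⁻ r in Set.Ioc (0:ℝ) s, Khat s r * ENNReal.ofReal (h0 r)
      ≤ ENNReal.ofReal (4 * h0 s) := by
    calc ∫⁻ r in Set.Ioc (0:ℝ) s, Khat s r * ENNReal.ofReal (h0 r)
        ≤ ∫⁻ r in Set.Ioc (0:ℝ) s,
            ENNReal.ofReal ((2 * (Real.sqrt s)⁻¹) * ((1-r) * Real.sqrt (1-r))⁻¹) := by
          apply lintegral_mono_ae
          rw [ae_restrict_iff' measurableSet_Ioc]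
          filter_upwards with r hr
          have hr0 : 0 < r := hr.1
          have hr1 : r < 1 := lt_of_le_of_lt hr.2 hs1
          have hrq : (0:ℝ) < Real.sqrt r := Real.sqrt_pos.2 hr0
          have hrq1 : (0:ℝ) < Real.sqrt (1-r) := Real.sqrt_pos.2 (by linarith)
          have hnn : (0:ℝ) ≤ 2*(r/s)/(1-r) :=
            div_nonneg (by positivity) (by linarith)
          rw [Khat, if_pos hr.2, ← ENNReal.ofReal_mul hnn]
          apply ENNReal.ofReal_le_ofReal
          unfold h0
          -- 2*(r/s)/(1-r) * ((√r)⁻¹ * (√(1-r))⁻¹) ≤ 2*(√s)⁻¹ * ((1-r)*√(1-r))⁻¹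
          rw [mul_inv ((1:ℝ)-r)]
          have key : 2*(r/s) * (Real.sqrt r)⁻¹ ≤ 2 * (Real.sqrt s)⁻¹ := by
            have h1 : r/s * (Real.sqrt r)⁻¹ = Real.sqrt r / s := by
              rw [div_mul_eq_mul_div, ← div_eq_mul_inv, Real.div_sqrt]
            rw [mul_assoc, h1]
            have h2 : Real.sqrt r / s ≤ (Real.sqrt s)⁻¹ := by
              rw [div_le_iff₀ hs0, inv_mul_eq_div, Real.div_sqrt]
              exact Real.sqrt_le_sqrt hr.2
            linarith [h2]
          calc 2*(r/s)/(1-r) * ((Real.sqrt r)⁻¹ * (Real.sqrt (1-r))⁻¹)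
              = (2*(r/s) * (Real.sqrt r)⁻¹) * ((1-r)⁻¹ * (Real.sqrt (1-r))⁻¹) := by ring
            _ ≤ (2 * (Real.sqrt s)⁻¹) * ((1-r)⁻¹ * (Real.sqrt (1-r))⁻¹) := by
                apply mul_le_mul_of_nonneg_right key
                  (mul_nonneg (inv_nonneg.2 (by linarith)) (by positivity))
      _ = ENNReal.ofReal (2 * (Real.sqrt s)⁻¹)
            * ∫⁻ r in Set.Ioc (0:ℝ) s, ENNReal.ofReal (((1-r) * Real.sqrt (1-r))⁻¹) := by
          simp_rw [ENNReal.ofReal_mul (by positivity : (0:ℝ) ≤ 2 * (Real.sqrt s)⁻¹)]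
          exact lintegral_const_mul' _ _ ENNReal.ofReal_ne_top
      _ ≤ ENNReal.ofReal (2 * (Real.sqrt s)⁻¹) * ENNReal.ofReal (2 * (Real.sqrt (1-s))⁻¹) := by
          exact mul_le_mul_right (lint_g1 hs0.le hs1) _
      _ = ENNReal.ofReal (4 * h0 s) := by
          rw [← ENNReal.ofReal_mul (by positivity)]
          congr 1
          unfold h0
          ring
  have piece2 : ∫⁻ r in Set.Ioc s 1, Khat s r * ENNReal.ofReal (h0 r)
      ≤ ENNReal.ofReal (h0 s) := by
    have hs2 : (0:ℝ) < 1 - s^2 := by nlinarith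
    calc ∫⁻ r in Set.Ioc s 1, Khat s r * ENNReal.ofReal (h0 r)
        ≤ ∫⁻ r in Set.Ioc s 1,
            ENNReal.ofReal ((s^2/(1-s^2)) * (Real.sqrt (1-r))⁻¹) := by
          apply lintegral_mono_ae
          rw [ae_restrict_iff' measurableSet_Ioc]
          filter_upwards with r hr
          have hr0 : 0 < r := lt_trans hs0 hr.1
          have hrq : (0:ℝ) < Real.sqrt r := Real.sqrt_pos.2 hr0
          have hnn : (0:ℝ) ≤ r^2*s^2/(1-s^2) :=
            div_nonneg (by positivity) hs2.le
          rw [Khat, if_neg (not_le.2 hr.1), ← ENNReal.ofReal_mul hnn]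
          apply ENNReal.ofReal_le_ofReal
          unfold h0
          have key : r^2 * (Real.sqrt r)⁻¹ ≤ 1 := by
            have h1 : r^2 * (Real.sqrt r)⁻¹ = r * (r / Real.sqrt r) := by ring
            rw [h1, Real.div_sqrt]
            have : Real.sqrt r ≤ 1 := Real.sqrt_le_one.2 hr.2
            nlinarith [hr0.le, Real.sqrt_nonneg r, hr.2]
          calc r^2*s^2/(1-s^2) * ((Real.sqrt r)⁻¹ * (Real.sqrt (1-r))⁻¹)
              = (r^2 * (Real.sqrt r)⁻¹) * (s^2/(1-s^2) * (Real.sqrt (1-r))⁻¹) := by ring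
            _ ≤ 1 * (s^2/(1-s^2) * (Real.sqrt (1-r))⁻¹) := by
                apply mul_le_mul_of_nonneg_right key
                  (mul_nonneg (div_nonneg (sq_nonneg s) hs2.le) (by positivity))
            _ = s^2/(1-s^2) * (Real.sqrt (1-r))⁻¹ := one_mul _
      _ = ENNReal.ofReal (s^2/(1-s^2))
            * ∫⁻ r in Set.Ioc s 1, ENNReal.ofReal ((Real.sqrt (1-r))⁻¹) := by
          simp_rw [ENNReal.ofReal_mul (div_nonneg (sq_nonneg s) hs2.le)]
          exact lintegral_const_mul' _ _ ENNReal.ofReal_ne_top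
      _ ≤ ENNReal.ofReal (s^2/(1-s^2)) * ENNReal.ofReal (2 * Real.sqrt (1-s)) := by
          exact mul_le_mul_right (lint_g2 hs0.le hs1) _
      _ ≤ ENNReal.ofReal (h0 s) := by
          rw [← ENNReal.ofReal_mul (div_nonneg (sq_nonneg s) hs2.le)]
          apply ENNReal.ofReal_le_ofReal
          unfold h0
          -- s^2/(1-s^2) * (2*√(1-s)) ≤ (√s)⁻¹ * (√(1-s))⁻¹
          have hss : Real.sqrt s * Real.sqrt s = s := Real.mul_self_sqrt hs0.le
          have hss1 : Real.sqrt (1-s) * Real.sqrt (1-s) = 1 - s := Real.mul_self_sqrt (by linarith)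
          have hsle : Real.sqrt s ≤ 1 := Real.sqrt_le_one.2 hs1.le
          rw [div_mul_eq_mul_div, div_le_iff₀ hs2, ← mul_inv, ← Real.sqrt_mul hs0.le,
            inv_mul_eq_div, le_div_iff₀ (Real.sqrt_pos.2 (by nlinarith))]
          have hs215 : Real.sqrt (s * (1-s)) = Real.sqrt s * Real.sqrt (1-s) :=
            Real.sqrt_mul hs0.le _
          rw [hs215]
          -- s^2 * (2*√(1-s)) * (√s * √(1-s)) ≤ 1 - s^2
          have key2 : s^2 * Real.sqrt s ≤ s := by
            nlinarith [hss, hsle, hs0.le, hs1.le, Real.sqrt_nonneg s]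
          nlinarith [mul_le_mul_of_nonneg_right key2 (by linarith : (0:ℝ) ≤ 1-s),
            hss1, sq_nonneg (1-s), Real.sqrt_nonneg (1-s), hs0.le]
  calc (∫⁻ r in Set.Ioc (0:ℝ) s, Khat s r * ENNReal.ofReal (h0 r))
        + ∫⁻ r in Set.Ioc s 1, Khat s r * ENNReal.ofReal (h0 r)
      ≤ ENNReal.ofReal (4 * h0 s) + ENNReal.ofReal (h0 s) := add_le_add piece1 piece2
    _ = ENNReal.ofReal (5 * h0 s) := by
        rw [← ENNReal.ofReal_add (by nlinarith [h0_nonneg s]) (h0_nonneg s)]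
        congr 1; ring

lemma col_bound {r : ℝ} (hr : r ∈ Set.Ioo (0:ℝ) 1) :
    ∫⁻ s in Set.Ioc (0:ℝ) 1, ENNReal.ofReal (s * h0 s) * Khat s r
      ≤ ENNReal.ofReal (5 * (r * h0 r)) := by
  obtain ⟨hr0, hr1⟩ := hr
  have hrq : (0:ℝ) < Real.sqrt r := Real.sqrt_pos.2 hr0
  have hrq1 : (0:ℝ) < Real.sqrt (1-r) := Real.sqrt_pos.2 (by linarith)
  have hrr : Real.sqrt r * Real.sqrt r = r := Real.mul_self_sqrt hr0.le
  have hrr1 : Real.sqrt (1-r) * Real.sqrt (1-r) = 1 - r := Real.mul_self_sqrt (by linarith)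
  rw [← Set.Ioc_union_Ioc_eq_Ioc hr0.le hr1.le,
    lintegral_union measurableSet_Ioc (Set.Ioc_disjoint_Ioc_of_le le_rfl)]
  have piece1 : ∫⁻ s in Set.Ioc (0:ℝ) r, ENNReal.ofReal (s * h0 s) * Khat s r
      ≤ ENNReal.ofReal (r * h0 r) := by
    rw [setLIntegral_congr (Filter.EventuallyEq.symm Ioo_ae_eq_Ioc)]
    calc ∫⁻ s in Set.Ioo (0:ℝ) r, ENNReal.ofReal (s * h0 s) * Khat s r
        ≤ ∫⁻ s in Set.Ioo (0:ℝ) r,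
            ENNReal.ofReal ((r^2/2) * ((1-s) * Real.sqrt (1-s))⁻¹) := by
          apply lintegral_mono_ae
          rw [ae_restrict_iff' measurableSet_Ioo]
          filter_upwards with s hsm
          have hs0 : 0 < s := hsm.1
          have hs1 : s < 1 := lt_trans hsm.2 hr1
          have hsq : (0:ℝ) < Real.sqrt s := Real.sqrt_pos.2 hs0
          have hsq1 : (0:ℝ) < Real.sqrt (1-s) := Real.sqrt_pos.2 (by linarith)
          have hss : Real.sqrt s * Real.sqrt s = s := Real.mul_self_sqrt hs0.le
          have hss1 : Real.sqrt (1-s) * Real.sqrt (1-s) = 1 - s := Real.mul_self_sqrt (by linarith)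
          have hs2 : (0:ℝ) < 1 - s^2 := by nlinarith
          have hnn : (0:ℝ) ≤ r^2*s^2/(1-s^2) := div_nonneg (by positivity) hs2.le
          rw [Khat, if_neg (not_le.2 hsm.2),
            ← ENNReal.ofReal_mul (mul_nonneg hs0.le (h0_nonneg s))]
          apply ENNReal.ofReal_le_ofReal
          unfold h0
          -- (s * ((√s)⁻¹ * (√(1-s))⁻¹)) * (r^2*s^2/(1-s^2)) ≤ r^2/2 * ((1-s)*√(1-s))⁻¹
          rw [mul_inv ((1:ℝ)-s)]
          -- key : s^3 * (√s)⁻¹ * (1-s²)⁻¹... reorganize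
          have hkey : s * (Real.sqrt s)⁻¹ * s^2 / (1-s^2) ≤ (1/2) * (1-s)⁻¹ := by
            have h1 : s * (Real.sqrt s)⁻¹ = Real.sqrt s := by
              rw [← div_eq_mul_inv, Real.div_sqrt]
            rw [h1, div_le_iff₀ hs2]
            -- √s * s^2 ≤ 1/2 * (1-s)⁻¹ * (1-s^2) = 1/2 * (1+s)
            have h2 : (1/2 : ℝ) * (1-s)⁻¹ * (1-s^2) = (1/2) * (1+s) := by
              field_simp [show (1:ℝ)-s ≠ 0 from by linarith]
              ring
            rw [h2]
            have hsle : Real.sqrt s ≤ 1 := Real.sqrt_le_one.2 hs1.le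
            nlinarith [hss, hs0.le, hsle]
          calc s * ((Real.sqrt s)⁻¹ * (Real.sqrt (1-s))⁻¹) * (r^2*s^2/(1-s^2))
              = (s * (Real.sqrt s)⁻¹ * s^2 / (1-s^2)) * (r^2 * (Real.sqrt (1-s))⁻¹) := by
                ring
            _ ≤ ((1/2) * (1-s)⁻¹) * (r^2 * (Real.sqrt (1-s))⁻¹) := by
                apply mul_le_mul_of_nonneg_right hkey (by positivity)
            _ = r^2/2 * ((1-s)⁻¹ * (Real.sqrt (1-s))⁻¹) := by ring
      _ ≤ ∫⁻ s in Set.Ioc (0:ℝ) r,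
            ENNReal.ofReal ((r^2/2) * ((1-s) * Real.sqrt (1-s))⁻¹) :=
          lintegral_mono_set Set.Ioo_subset_Ioc_self
      _ = ENNReal.ofReal (r^2/2)
            * ∫⁻ s in Set.Ioc (0:ℝ) r, ENNReal.ofReal (((1-s) * Real.sqrt (1-s))⁻¹) := by
          simp_rw [ENNReal.ofReal_mul (by positivity : (0:ℝ) ≤ r^2/2)]
          exact lintegral_const_mul' _ _ ENNReal.ofReal_ne_top
      _ ≤ ENNReal.ofReal (r^2/2) * ENNReal.ofReal (2 * (Real.sqrt (1-r))⁻¹) := by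
          exact mul_le_mul_right (lint_g1 hr0.le hr1) _
      _ ≤ ENNReal.ofReal (r * h0 r) := by
          rw [← ENNReal.ofReal_mul (by positivity)]
          apply ENNReal.ofReal_le_ofReal
          unfold h0
          -- r^2/2 * (2*(√(1-r))⁻¹) ≤ r * ((√r)⁻¹ * (√(1-r))⁻¹)
          have hx : r * (Real.sqrt r)⁻¹ = Real.sqrt r := by
            rw [← div_eq_mul_inv, Real.div_sqrt]
          have h1 : r * ((Real.sqrt r)⁻¹ * (Real.sqrt (1-r))⁻¹)
              = Real.sqrt r * (Real.sqrt (1-r))⁻¹ := by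
            calc r * ((Real.sqrt r)⁻¹ * (Real.sqrt (1-r))⁻¹)
                = (r * (Real.sqrt r)⁻¹) * (Real.sqrt (1-r))⁻¹ := by ring
              _ = Real.sqrt r * (Real.sqrt (1-r))⁻¹ := by rw [hx]
          rw [h1]
          have ha : Real.sqrt r ≤ 1 := Real.sqrt_le_one.2 hr1.le
          have hb : r ≤ Real.sqrt r := by nlinarith [hrr, hrq.le]
          have h2 : r^2 ≤ Real.sqrt r := by nlinarith [hr0.le, hr1.le]
          calc r^2/2 * (2*(Real.sqrt (1-r))⁻¹) = r^2 * (Real.sqrt (1-r))⁻¹ := by ring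
            _ ≤ Real.sqrt r * (Real.sqrt (1-r))⁻¹ :=
                mul_le_mul_of_nonneg_right h2 (by positivity)
  have piece2 : ∫⁻ s in Set.Ioc r 1, ENNReal.ofReal (s * h0 s) * Khat s r
      ≤ ENNReal.ofReal (4 * (r * h0 r)) := by
    calc ∫⁻ s in Set.Ioc r 1, ENNReal.ofReal (s * h0 s) * Khat s r
        ≤ ∫⁻ s in Set.Ioc r 1,
            ENNReal.ofReal ((2*r/((1-r) * Real.sqrt r)) * (Real.sqrt (1-s))⁻¹) := by
          apply lintegral_mono_ae
          rw [ae_restrict_iff' measurableSet_Ioc]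
          filter_upwards with s hsm
          have hs0 : 0 < s := lt_trans hr0 hsm.1
          have hsq : (0:ℝ) < Real.sqrt s := Real.sqrt_pos.2 hs0
          have hnn : (0:ℝ) ≤ 2*(r/s)/(1-r) :=
            div_nonneg (by positivity) (by linarith)
          rw [Khat, if_pos hsm.1.le,
            ← ENNReal.ofReal_mul (mul_nonneg hs0.le (h0_nonneg s))]
          apply ENNReal.ofReal_le_ofReal
          unfold h0
          -- s * ((√s)⁻¹*(√(1-s))⁻¹) * (2*(r/s)/(1-r)) ≤ 2r/((1-r)√r) * (√(1-s))⁻¹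
          have hc : s * (2*(r/s)/(1-r)) = 2*r/(1-r) := by
            field_simp [hs0.ne', (show (1:ℝ)-r ≠ 0 from by linarith)]
          have h1 : s * ((Real.sqrt s)⁻¹ * (Real.sqrt (1-s))⁻¹) * (2*(r/s)/(1-r))
              = (2*r/(1-r)) * (Real.sqrt s)⁻¹ * (Real.sqrt (1-s))⁻¹ := by
            calc s * ((Real.sqrt s)⁻¹ * (Real.sqrt (1-s))⁻¹) * (2*(r/s)/(1-r))
                = (Real.sqrt s)⁻¹ * (Real.sqrt (1-s))⁻¹ * (s * (2*(r/s)/(1-r))) := by ring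
              _ = (2*r/(1-r)) * (Real.sqrt s)⁻¹ * (Real.sqrt (1-s))⁻¹ := by rw [hc]; ring
          rw [h1]
          have h2 : (Real.sqrt s)⁻¹ ≤ (Real.sqrt r)⁻¹ := by
            apply inv_anti₀ hrq
            exact Real.sqrt_le_sqrt hsm.1.le
          calc (2*r/(1-r)) * (Real.sqrt s)⁻¹ * (Real.sqrt (1-s))⁻¹
              ≤ (2*r/(1-r)) * (Real.sqrt r)⁻¹ * (Real.sqrt (1-s))⁻¹ := by
                apply mul_le_mul_of_nonneg_right
                  (mul_le_mul_of_nonneg_left h2 (div_nonneg (by positivity) (by linarith)))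
                  (by positivity)
            _ = (2*r/((1-r) * Real.sqrt r)) * (Real.sqrt (1-s))⁻¹ := by
                rw [div_eq_mul_inv, div_eq_mul_inv, mul_inv]
                ring
      _ = ENNReal.ofReal (2*r/((1-r) * Real.sqrt r))
            * ∫⁻ s in Set.Ioc r 1, ENNReal.ofReal ((Real.sqrt (1-s))⁻¹) := by
          rw [← lintegral_const_mul' _ _ ENNReal.ofReal_ne_top]
          apply lintegral_congr
          intro s
          rw [← ENNReal.ofReal_mul (div_nonneg (by linarith : (0:ℝ) ≤ 2*r)
            (mul_nonneg (by linarith) hrq.le))]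
      _ ≤ ENNReal.ofReal (2*r/((1-r) * Real.sqrt r)) * ENNReal.ofReal (2 * Real.sqrt (1-r)) := by
          exact mul_le_mul_right (lint_g2 hr0.le hr1) _
      _ ≤ ENNReal.ofReal (4 * (r * h0 r)) := by
          rw [← ENNReal.ofReal_mul (div_nonneg (by linarith : (0:ℝ) ≤ 2*r)
            (mul_nonneg (by linarith) hrq.le))]
          apply ENNReal.ofReal_le_ofReal
          unfold h0
          -- 2r/((1-r)√r) * (2√(1-r)) ≤ 4 * (r * ((√r)⁻¹ (√(1-r))⁻¹)) ; in fact equality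
          have hx : r * (Real.sqrt r)⁻¹ = Real.sqrt r := by
            rw [← div_eq_mul_inv, Real.div_sqrt]
          have h1 : r * ((Real.sqrt r)⁻¹ * (Real.sqrt (1-r))⁻¹)
              = Real.sqrt r * (Real.sqrt (1-r))⁻¹ := by
            calc r * ((Real.sqrt r)⁻¹ * (Real.sqrt (1-r))⁻¹)
                = (r * (Real.sqrt r)⁻¹) * (Real.sqrt (1-r))⁻¹ := by ring
              _ = Real.sqrt r * (Real.sqrt (1-r))⁻¹ := by rw [hx]
          rw [h1, div_mul_eq_mul_div, div_le_iff₀ (mul_pos (by linarith : (0:ℝ) < 1-r) hrq)]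
          have hy : (Real.sqrt (1-r))⁻¹ * (1-r) = Real.sqrt (1-r) := by
            rw [inv_mul_eq_div, Real.div_sqrt]
          have hz : (4:ℝ)*(Real.sqrt r*(Real.sqrt (1-r))⁻¹)*((1-r)*Real.sqrt r)
              = 4*r*Real.sqrt (1-r) := by
            calc (4:ℝ)*(Real.sqrt r*(Real.sqrt (1-r))⁻¹)*((1-r)*Real.sqrt r)
                = 4*(Real.sqrt r*Real.sqrt r)*((Real.sqrt (1-r))⁻¹*(1-r)) := by ring
              _ = 4*r*Real.sqrt (1-r) := by rw [hrr, hy]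
          rw [hz]
          nlinarith [mul_nonneg hr0.le hrq1.le]
  calc (∫⁻ s in Set.Ioc (0:ℝ) r, ENNReal.ofReal (s * h0 s) * Khat s r)
        + ∫⁻ s in Set.Ioc r 1, ENNReal.ofReal (s * h0 s) * Khat s r
      ≤ ENNReal.ofReal (r * h0 r) + ENNReal.ofReal (4 * (r * h0 r)) := add_le_add piece1 piece2
    _ = ENNReal.ofReal (5 * (r * h0 r)) := by
        rw [← ENNReal.ofReal_add (mul_nonneg hr0.le (h0_nonneg r))
          (by nlinarith [mul_nonneg hr0.le (h0_nonneg r)])]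
        congr 1; ring

lemma enorm_Tl_le (l : ℤ) (hl : l ≤ -1) (f : ℝ → ℂ) {s : ℝ} (hs : s ∈ Set.Ioo (0:ℝ) 1) :
    (‖Tl l f s‖₊ : ℝ≥0∞) ≤ ∫⁻ r in Set.Ioc (0:ℝ) 1, Khat s r * ‖f r‖₊ := by
  obtain ⟨hs0, hs1⟩ := hs
  set m := (1-l).toNat with hmdef
  have hm2 : 2 ≤ m := by omega
  have hC0 : (0:ℝ) ≤ ∑ n ∈ Finset.range m, s ^ (2*n) :=
    Finset.sum_nonneg fun n _ => pow_nonneg hs0.le _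
  have hs2 : (0:ℝ) < 1 - s^2 := by nlinarith
  have bound1 : (‖(∑ n ∈ Finset.range ((-l).toNat + 1), (s:ℂ) ^ (2 * n)) *
      ∫ r in Set.Ioc (0:ℝ) s, ((r / s : ℝ) : ℂ) ^ m * f r‖₊ : ℝ≥0∞)
      ≤ ∫⁻ r in Set.Ioc (0:ℝ) s, Khat s r * ‖f r‖₊ := by
    have hc1 : (‖∑ n ∈ Finset.range ((-l).toNat + 1), (s:ℂ) ^ (2 * n)‖₊ : ℝ≥0∞)
        = ENNReal.ofReal (∑ n ∈ Finset.range m, s ^ (2*n)) := by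
      have hms : (-l).toNat + 1 = m := by omega
      have hcast : (∑ n ∈ Finset.range ((-l).toNat + 1), (s:ℂ) ^ (2 * n))
          = ((∑ n ∈ Finset.range m, s ^ (2*n) : ℝ) : ℂ) := by
        rw [hms]; push_cast; rfl
      rw [hcast, ← enorm_eq_nnnorm, ← ofReal_norm, Complex.norm_real, Real.norm_of_nonneg hC0]
    rw [nnnorm_mul, ENNReal.coe_mul, hc1]
    calc ENNReal.ofReal (∑ n ∈ Finset.range m, s ^ (2*n)) *
          (‖∫ r in Set.Ioc (0:ℝ) s, ((r / s : ℝ) : ℂ) ^ m * f r‖₊ : ℝ≥0∞)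
        ≤ ENNReal.ofReal (∑ n ∈ Finset.range m, s ^ (2*n)) *
          ∫⁻ r in Set.Ioc (0:ℝ) s, ‖((r / s : ℝ) : ℂ) ^ m * f r‖₊ :=
          mul_le_mul_right (enorm_integral_le_lintegral_enorm _) _
      _ = ∫⁻ r in Set.Ioc (0:ℝ) s, ENNReal.ofReal (∑ n ∈ Finset.range m, s ^ (2*n)) *
            ‖((r / s : ℝ) : ℂ) ^ m * f r‖₊ :=
          (lintegral_const_mul' _ _ ENNReal.ofReal_ne_top).symm
      _ ≤ ∫⁻ r in Set.Ioc (0:ℝ) s, Khat s r * ‖f r‖₊ := by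
          apply lintegral_mono_ae
          rw [ae_restrict_iff' measurableSet_Ioc]
          filter_upwards with r hr
          have hr0 : 0 < r := hr.1
          have hq0 : (0:ℝ) ≤ r/s := div_nonneg hr0.le hs0.le
          have hx : (‖((r / s : ℝ) : ℂ) ^ m * f r‖₊ : ℝ≥0∞)
              = ENNReal.ofReal ((r/s)^m) * ‖f r‖₊ := by
            rw [nnnorm_mul, ENNReal.coe_mul]
            congr 1
            rw [← enorm_eq_nnnorm, ← ofReal_norm, norm_pow, Complex.norm_real,
              Real.norm_of_nonneg hq0]
          rw [hx, ← mul_assoc, ← ENNReal.ofReal_mul hC0]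
          apply mul_le_mul_left
          rw [Khat, if_pos hr.2]
          exact ENNReal.ofReal_le_ofReal (kernel1_bound hm2 hr0 hr.2 hs1)
  have bound2 : (‖(1 / (1 - (s:ℂ) ^ 2)) *
      ∫ r in Set.Ioc s 1, ((r * s : ℝ) : ℂ) ^ m * f r‖₊ : ℝ≥0∞)
      ≤ ∫⁻ r in Set.Ioc s 1, Khat s r * ‖f r‖₊ := by
    have hc2 : (‖(1:ℂ) / (1 - (s:ℂ) ^ 2)‖₊ : ℝ≥0∞) = ENNReal.ofReal (1/(1-s^2)) := by
      have hcast : (1:ℂ) - (s:ℂ)^2 = ((1-s^2 : ℝ) : ℂ) := by push_cast; ring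
      rw [hcast, ← enorm_eq_nnnorm, ← ofReal_norm, norm_div, norm_one, Complex.norm_real,
        Real.norm_of_nonneg hs2.le]
    rw [nnnorm_mul, ENNReal.coe_mul, hc2]
    calc ENNReal.ofReal (1/(1-s^2)) *
          (‖∫ r in Set.Ioc s 1, ((r * s : ℝ) : ℂ) ^ m * f r‖₊ : ℝ≥0∞)
        ≤ ENNReal.ofReal (1/(1-s^2)) *
          ∫⁻ r in Set.Ioc s 1, ‖((r * s : ℝ) : ℂ) ^ m * f r‖₊ :=
          mul_le_mul_right (enorm_integral_le_lintegral_enorm _) _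
      _ = ∫⁻ r in Set.Ioc s 1, ENNReal.ofReal (1/(1-s^2)) *
            ‖((r * s : ℝ) : ℂ) ^ m * f r‖₊ :=
          (lintegral_const_mul' _ _ ENNReal.ofReal_ne_top).symm
      _ ≤ ∫⁻ r in Set.Ioc s 1, Khat s r * ‖f r‖₊ := by
          apply lintegral_mono_ae
          rw [ae_restrict_iff' measurableSet_Ioc]
          filter_upwards with r hr
          have hr0 : 0 < r := lt_trans hs0 hr.1
          have hq0 : (0:ℝ) ≤ r*s := mul_nonneg hr0.le hs0.le
          have hx : (‖((r * s : ℝ) : ℂ) ^ m * f r‖₊ : ℝ≥0∞)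
              = ENNReal.ofReal ((r*s)^m) * ‖f r‖₊ := by
            rw [nnnorm_mul, ENNReal.coe_mul]
            congr 1
            rw [← enorm_eq_nnnorm, ← ofReal_norm, norm_pow, Complex.norm_real,
              Real.norm_of_nonneg hq0]
          rw [hx, ← mul_assoc, ← ENNReal.ofReal_mul (by positivity)]
          apply mul_le_mul_left
          rw [Khat, if_neg (not_le.2 hr.1)]
          apply ENNReal.ofReal_le_ofReal
          have hmle : (r*s)^m ≤ (r*s)^2 :=
            pow_le_pow_of_le_one hq0 (mul_le_one₀ hr.2 hs0.le hs1.le) hm2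
          calc 1/(1-s^2) * (r*s)^m ≤ 1/(1-s^2) * (r*s)^2 := by
                apply mul_le_mul_of_nonneg_left hmle (by positivity)
            _ = r^2*s^2/(1-s^2) := by ring
  calc (‖Tl l f s‖₊ : ℝ≥0∞)
      ≤ (‖(∑ n ∈ Finset.range ((-l).toNat + 1), (s:ℂ) ^ (2 * n)) *
          ∫ r in Set.Ioc (0:ℝ) s, ((r / s : ℝ) : ℂ) ^ m * f r‖₊ : ℝ≥0∞)
        + ‖(1 / (1 - (s:ℂ) ^ 2)) * ∫ r in Set.Ioc s 1, ((r * s : ℝ) : ℂ) ^ m * f r‖₊ := by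
        rw [Tl]
        rw [← ENNReal.coe_add]
        apply ENNReal.coe_le_coe.2
        exact (nnnorm_add_le _ _).trans_eq (by rw [nnnorm_neg])
    _ ≤ (∫⁻ r in Set.Ioc (0:ℝ) s, Khat s r * ‖f r‖₊)
        + ∫⁻ r in Set.Ioc s 1, Khat s r * ‖f r‖₊ := add_le_add bound1 bound2
    _ = ∫⁻ r in Set.Ioc (0:ℝ) 1, Khat s r * ‖f r‖₊ := by
        rw [← lintegral_union measurableSet_Ioc (Set.Ioc_disjoint_Ioc_of_le le_rfl),
          Set.Ioc_union_Ioc_eq_Ioc hs0.le hs1.le]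

lemma pointwise_CS {f : ℝ → ℂ} (hg : Measurable (fun r => (‖f r‖₊ : ℝ≥0∞))) (s : ℝ) :
    (∫⁻ r in Set.Ioc (0:ℝ) 1, Khat s r * ‖f r‖₊) ^ 2
      ≤ (∫⁻ r in Set.Ioc (0:ℝ) 1, Khat s r * ENNReal.ofReal (h0 r)) *
        ∫⁻ r in Set.Ioc (0:ℝ) 1, Khat s r * ENNReal.ofReal (hinv r) * (‖f r‖₊ : ℝ≥0∞) ^ 2 := by
  set μ := volume.restrict (Set.Ioc (0:ℝ) 1)
  set A := fun r => Khat s r * ENNReal.ofReal (h0 r) with hA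
  set B := fun r => Khat s r * ENNReal.ofReal (hinv r) * (‖f r‖₊ : ℝ≥0∞) ^ 2 with hB
  have hmeasA : Measurable A := ((measurable_Khat_r s).mul (measurable_h0.ennreal_ofReal))
  have hmeasB : Measurable B :=
    (((measurable_Khat_r s).mul (measurable_hinv.ennreal_ofReal)).mul (hg.pow_const 2))
  have hae : ∀ᵐ r ∂μ, r ∈ Set.Ioo (0:ℝ) 1 := by
    have h1 : μ {(1:ℝ)} = 0 :=
      le_antisymm ((Measure.restrict_le_self _).trans_eq Real.volume_singleton) zero_le
    have h2 : ∀ᵐ r ∂μ, r ≠ 1 := by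
      rw [ae_iff]
      simpa using h1
    filter_upwards [ae_restrict_mem measurableSet_Ioc, h2] with r hr hne
    exact ⟨hr.1, lt_of_le_of_ne hr.2 hne⟩
  have key : ∀ᵐ r ∂μ, Khat s r * ‖f r‖₊ = A r ^ (1/2 : ℝ) * B r ^ (1/2 : ℝ) := by
    filter_upwards [hae] with r hr
    have hx : ENNReal.ofReal (h0 r) * ENNReal.ofReal (hinv r) = 1 := by
      rw [← ENNReal.ofReal_mul (h0_nonneg r)]
      have : h0 r * hinv r = 1 := by
        unfold h0 hinv
        have h1 : Real.sqrt r ≠ 0 := (Real.sqrt_pos.2 hr.1).ne'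
        have h2 : Real.sqrt (1-r) ≠ 0 := (Real.sqrt_pos.2 (by linarith [hr.2])).ne'
        field_simp
      rw [this, ENNReal.ofReal_one]
    rw [← ENNReal.mul_rpow_of_nonneg _ _ (by norm_num : (0:ℝ) ≤ 1/2)]
    have hAB : A r * B r = (Khat s r * ‖f r‖₊) ^ (2:ℕ) := by
      rw [hA, hB]
      calc Khat s r * ENNReal.ofReal (h0 r) *
            (Khat s r * ENNReal.ofReal (hinv r) * (‖f r‖₊ : ℝ≥0∞) ^ 2)
          = (Khat s r * ‖f r‖₊)^2 * (ENNReal.ofReal (h0 r) * ENNReal.ofReal (hinv r)) := by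
            ring
        _ = (Khat s r * ‖f r‖₊) ^ (2:ℕ) := by rw [hx, mul_one]
    rw [hAB, ← ENNReal.rpow_natCast ((Khat s r * ‖f r‖₊)) 2, ← ENNReal.rpow_mul]
    norm_num
  have hpq : Real.HolderConjugate 2 2 := Real.HolderConjugate.two_two
  have hCS := ENNReal.lintegral_mul_le_Lp_mul_Lq μ hpq
    (hmeasA.pow_const ((1:ℝ)/2)).aemeasurable (hmeasB.pow_const ((1:ℝ)/2)).aemeasurable
  have hsimpA : (∫⁻ r, ((fun r => A r ^ ((1:ℝ)/2)) r) ^ (2:ℝ) ∂μ) = ∫⁻ r, A r ∂μ :=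
    lintegral_congr fun r => by
      show (A r ^ ((1:ℝ)/2)) ^ (2:ℝ) = A r
      rw [← ENNReal.rpow_mul]
      norm_num
  have hsimpB : (∫⁻ r, ((fun r => B r ^ ((1:ℝ)/2)) r) ^ (2:ℝ) ∂μ) = ∫⁻ r, B r ∂μ :=
    lintegral_congr fun r => by
      show (B r ^ ((1:ℝ)/2)) ^ (2:ℝ) = B r
      rw [← ENNReal.rpow_mul]
      norm_num
  have hsq : ∀ x : ℝ≥0∞, (x ^ ((1:ℝ)/2)) ^ (2:ℕ) = x := fun x => by
    rw [← ENNReal.rpow_natCast (x ^ ((1:ℝ)/2)) 2, ← ENNReal.rpow_mul]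
    norm_num
  calc (∫⁻ r in Set.Ioc (0:ℝ) 1, Khat s r * ‖f r‖₊) ^ 2
      = (∫⁻ r, A r ^ ((1:ℝ)/2) * B r ^ ((1:ℝ)/2) ∂μ) ^ 2 := by
        rw [lintegral_congr_ae key]
    _ ≤ ((∫⁻ r, A r ∂μ) ^ ((1:ℝ)/2) * (∫⁻ r, B r ∂μ) ^ ((1:ℝ)/2)) ^ 2 := by
        gcongr
        calc ∫⁻ r, A r ^ ((1:ℝ)/2) * B r ^ ((1:ℝ)/2) ∂μ
            = ∫⁻ r, ((fun r => A r ^ ((1:ℝ)/2)) * fun r => B r ^ ((1:ℝ)/2)) r ∂μ := rfl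
          _ ≤ (∫⁻ r, ((fun r => A r ^ ((1:ℝ)/2)) r) ^ (2:ℝ) ∂μ) ^ ((1:ℝ)/2)
                * (∫⁻ r, ((fun r => B r ^ ((1:ℝ)/2)) r) ^ (2:ℝ) ∂μ) ^ ((1:ℝ)/2) := by
              simpa using hCS
          _ = (∫⁻ r, A r ∂μ) ^ ((1:ℝ)/2) * (∫⁻ r, B r ∂μ) ^ ((1:ℝ)/2) := by
              rw [hsimpA, hsimpB]
    _ = (∫⁻ r, A r ∂μ) * ∫⁻ r, B r ∂μ := by
        rw [mul_pow, hsq, hsq]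

lemma main_sm (l : ℤ) (hl : l ≤ -1) (f : ℝ → ℂ)
    (hfm : StronglyMeasurable f)
    (hf : IntegrableOn (fun r : ℝ => ‖f r‖ ^ 2 * r) (Set.Ioc (0:ℝ) 1)) :
    (∫ s in Set.Ioc (0:ℝ) 1, ‖Tl l f s‖ ^ 2 * s)
      ≤ 25 * ∫ r in Set.Ioc (0:ℝ) 1, ‖f r‖ ^ 2 * r := by
  have hg : Measurable (fun r => (‖f r‖₊ : ℝ≥0∞)) :=
    hfm.measurable.nnnorm.coe_nnreal_ennreal
  have hRHS0 : 0 ≤ ∫ r in Set.Ioc (0:ℝ) 1, ‖f r‖ ^ 2 * r :=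
    setIntegral_nonneg measurableSet_Ioc fun r hr =>
      mul_nonneg (by positivity) (le_of_lt hr.1)
  have hRHS : ∫⁻ r in Set.Ioc (0:ℝ) 1, (‖f r‖₊ : ℝ≥0∞)^2 * ENNReal.ofReal r
      = ENNReal.ofReal (∫ r in Set.Ioc (0:ℝ) 1, ‖f r‖^2 * r) := by
    rw [MeasureTheory.ofReal_integral_eq_lintegral_ofReal hf ?nn]
    case nn =>
      filter_upwards [ae_Ioo] with r hr
      exact mul_nonneg (by positivity) hr.1.le
    apply lintegral_congr_ae
    filter_upwards [ae_Ioo] with r hr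
    rw [ENNReal.ofReal_mul (by positivity), ENNReal.ofReal_pow (norm_nonneg _),
      ofReal_norm, enorm_eq_nnnorm]
  set N : ℝ → ℝ≥0∞ := fun s =>
    ∫⁻ r in Set.Ioc (0:ℝ) 1, Khat s r * ENNReal.ofReal (hinv r) * (‖f r‖₊ : ℝ≥0∞)^2 with hN
  set W : ℝ → ℝ≥0∞ := fun s => ENNReal.ofReal (s * h0 s) with hW
  have hmeasW : Measurable W := (measurable_id.mul measurable_h0).ennreal_ofReal
  have key : ∫⁻ s in Set.Ioc (0:ℝ) 1, ENNReal.ofReal (‖Tl l f s‖^2 * s)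
      ≤ ENNReal.ofReal 25 * ∫⁻ r in Set.Ioc (0:ℝ) 1, (‖f r‖₊:ℝ≥0∞)^2 * ENNReal.ofReal r := by
    calc ∫⁻ s in Set.Ioc (0:ℝ) 1, ENNReal.ofReal (‖Tl l f s‖^2 * s)
        ≤ ∫⁻ s in Set.Ioc (0:ℝ) 1, ENNReal.ofReal 5 * (W s * N s) := by
          apply lintegral_mono_ae
          filter_upwards [ae_Ioo] with s hsm
          have hb : ENNReal.ofReal (‖Tl l f s‖^2 * s)
              = (‖Tl l f s‖₊ : ℝ≥0∞)^2 * ENNReal.ofReal s := by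
            rw [ENNReal.ofReal_mul (by positivity), ENNReal.ofReal_pow (norm_nonneg _),
              ofReal_norm, enorm_eq_nnnorm]
          rw [hb]
          calc (‖Tl l f s‖₊ : ℝ≥0∞)^2 * ENNReal.ofReal s
              ≤ (ENNReal.ofReal (5 * h0 s) * N s) * ENNReal.ofReal s := by
                apply mul_le_mul_left
                calc (‖Tl l f s‖₊ : ℝ≥0∞)^2
                    ≤ (∫⁻ r in Set.Ioc (0:ℝ) 1, Khat s r * ‖f r‖₊)^2 := by
                      gcongr
                      exact enorm_Tl_le l hl f hsm
                  _ ≤ (∫⁻ r in Set.Ioc (0:ℝ) 1, Khat s r * ENNReal.ofReal (h0 r)) * N s :=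
                      pointwise_CS hg s
                  _ ≤ ENNReal.ofReal (5 * h0 s) * N s :=
                      mul_le_mul_left (row_bound hsm) _
            _ = ENNReal.ofReal 5 * (W s * N s) := by
                rw [hW]
                have h1 : ENNReal.ofReal (5 * h0 s) * N s * ENNReal.ofReal s
                    = (ENNReal.ofReal (5 * h0 s) * ENNReal.ofReal s) * N s := by ring
                rw [h1, ← ENNReal.ofReal_mul (mul_nonneg (by norm_num) (h0_nonneg s))]
                have h2 : 5 * h0 s * s = 5 * (s * h0 s) := by ring
                rw [h2, ENNReal.ofReal_mul (by norm_num : (0:ℝ) ≤ 5)]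
                ring
      _ = ENNReal.ofReal 5 * ∫⁻ s in Set.Ioc (0:ℝ) 1, W s * N s :=
          lintegral_const_mul' _ _ ENNReal.ofReal_ne_top
      _ ≤ ENNReal.ofReal 5 * (ENNReal.ofReal 5
            * ∫⁻ r in Set.Ioc (0:ℝ) 1, (‖f r‖₊:ℝ≥0∞)^2 * ENNReal.ofReal r) := by
          apply mul_le_mul_right
          have hswap : ∫⁻ s in Set.Ioc (0:ℝ) 1, W s * N s
              = ∫⁻ r in Set.Ioc (0:ℝ) 1, (ENNReal.ofReal (hinv r) * (‖f r‖₊:ℝ≥0∞)^2)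
                  * ∫⁻ s in Set.Ioc (0:ℝ) 1, W s * Khat s r := by
            have hmeas : Measurable (fun p : ℝ × ℝ =>
                W p.1 * (Khat p.1 p.2 * ENNReal.ofReal (hinv p.2) * (‖f p.2‖₊:ℝ≥0∞)^2)) := by
              apply (hmeasW.comp measurable_fst).mul
              exact ((measurable_Khat_pair.mul
                ((measurable_hinv.comp measurable_snd).ennreal_ofReal)).mul
                ((hg.comp measurable_snd).pow_const 2))
            calc ∫⁻ s in Set.Ioc (0:ℝ) 1, W s * N s
                = ∫⁻ s in Set.Ioc (0:ℝ) 1, ∫⁻ r in Set.Ioc (0:ℝ) 1,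
                    W s * (Khat s r * ENNReal.ofReal (hinv r) * (‖f r‖₊:ℝ≥0∞)^2) := by
                  apply lintegral_congr fun s => ?_
                  exact (lintegral_const_mul' _ _ ENNReal.ofReal_ne_top).symm
              _ = ∫⁻ r in Set.Ioc (0:ℝ) 1, ∫⁻ s in Set.Ioc (0:ℝ) 1,
                    W s * (Khat s r * ENNReal.ofReal (hinv r) * (‖f r‖₊:ℝ≥0∞)^2) :=
                  lintegral_lintegral_swap hmeas.aemeasurable
              _ = ∫⁻ r in Set.Ioc (0:ℝ) 1, (ENNReal.ofReal (hinv r) * (‖f r‖₊:ℝ≥0∞)^2)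
                    * ∫⁻ s in Set.Ioc (0:ℝ) 1, W s * Khat s r := by
                  apply lintegral_congr fun r => ?_
                  rw [← lintegral_const_mul' _ _
                    (ENNReal.mul_ne_top ENNReal.ofReal_ne_top
                      (pow_ne_top ENNReal.coe_ne_top))]
                  apply lintegral_congr fun s => ?_
                  ring
          rw [hswap]
          calc ∫⁻ r in Set.Ioc (0:ℝ) 1, (ENNReal.ofReal (hinv r) * (‖f r‖₊:ℝ≥0∞)^2)
                  * ∫⁻ s in Set.Ioc (0:ℝ) 1, W s * Khat s r
              ≤ ∫⁻ r in Set.Ioc (0:ℝ) 1, (ENNReal.ofReal (hinv r) * (‖f r‖₊:ℝ≥0∞)^2)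
                  * ENNReal.ofReal (5 * (r * h0 r)) := by
                apply lintegral_mono_ae
                filter_upwards [ae_Ioo] with r hrm
                exact mul_le_mul_right (col_bound hrm) _
            _ = ∫⁻ r in Set.Ioc (0:ℝ) 1,
                  ENNReal.ofReal 5 * ((‖f r‖₊:ℝ≥0∞)^2 * ENNReal.ofReal r) := by
                apply lintegral_congr_ae
                filter_upwards [ae_Ioo] with r hrm
                have h1 : ENNReal.ofReal (hinv r) * (‖f r‖₊:ℝ≥0∞)^2
                      * ENNReal.ofReal (5 * (r * h0 r))
                    = (ENNReal.ofReal (hinv r) * ENNReal.ofReal (5 * (r * h0 r)))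
                      * (‖f r‖₊:ℝ≥0∞)^2 := by ring
                rw [h1, ← ENNReal.ofReal_mul (hinv_nonneg r)]
                have h2 : hinv r * (5 * (r * h0 r)) = 5 * r * (h0 r * hinv r) := by ring
                rw [h2, h0_mul_hinv hrm, mul_one,
                  ENNReal.ofReal_mul (by norm_num : (0:ℝ) ≤ 5)]
                ring
            _ = ENNReal.ofReal 5
                  * ∫⁻ r in Set.Ioc (0:ℝ) 1, (‖f r‖₊:ℝ≥0∞)^2 * ENNReal.ofReal r :=
                lintegral_const_mul' _ _ ENNReal.ofReal_ne_top
      _ = ENNReal.ofReal 25 * ∫⁻ r in Set.Ioc (0:ℝ) 1, (‖f r‖₊:ℝ≥0∞)^2 * ENNReal.ofReal r := by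
          rw [← mul_assoc, ← ENNReal.ofReal_mul (by norm_num : (0:ℝ) ≤ 5)]
          norm_num
  by_cases hTi : IntegrableOn (fun s => ‖Tl l f s‖^2 * s) (Set.Ioc (0:ℝ) 1)
  · have hLHS : ∫ s in Set.Ioc (0:ℝ) 1, ‖Tl l f s‖^2 * s
        = (∫⁻ s in Set.Ioc (0:ℝ) 1, ENNReal.ofReal (‖Tl l f s‖^2 * s)).toReal := by
      apply integral_eq_lintegral_of_nonneg_ae
      · filter_upwards [ae_Ioo] with s hs
        exact mul_nonneg (by positivity) hs.1.le
      · exact hTi.aestronglyMeasurable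
    rw [hLHS]
    apply ENNReal.toReal_le_of_le_ofReal (mul_nonneg (by norm_num) hRHS0)
    calc ∫⁻ s in Set.Ioc (0:ℝ) 1, ENNReal.ofReal (‖Tl l f s‖^2 * s)
        ≤ ENNReal.ofReal 25 * ∫⁻ r in Set.Ioc (0:ℝ) 1, (‖f r‖₊:ℝ≥0∞)^2 * ENNReal.ofReal r :=
          key
      _ = ENNReal.ofReal (25 * ∫ r in Set.Ioc (0:ℝ) 1, ‖f r‖^2 * r) := by
          rw [hRHS, ← ENNReal.ofReal_mul (by norm_num : (0:ℝ) ≤ 25)]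
  · rw [integral_undef hTi]
    exact mul_nonneg (by norm_num) hRHS0

end TlAux

/-- For every `l ≤ −1`, `T_l` is bounded on `L²([0,1], r dr)` with
`‖T_l f‖² ≤ 25 ‖f‖²`, uniformly in `l`. -/
theorem Tl_neg_bounded (l : ℤ) (hl : l ≤ -1) (f : ℝ → ℂ)
    (hfm : AEStronglyMeasurable f (volume.restrict (Set.Ioc (0:ℝ) 1)))
    (hf : IntegrableOn (fun r : ℝ => ‖f r‖ ^ 2 * r) (Set.Ioc (0:ℝ) 1)) :
    (∫ s in Set.Ioc (0:ℝ) 1, ‖Tl l f s‖ ^ 2 * s)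
      ≤ 25 * ∫ r in Set.Ioc (0:ℝ) 1, ‖f r‖ ^ 2 * r := by
  set f' := hfm.mk f with hf'def
  have hff' : f =ᵐ[volume.restrict (Set.Ioc (0:ℝ) 1)] f' := hfm.ae_eq_mk
  have hf'm : StronglyMeasurable f' := hfm.stronglyMeasurable_mk
  have hRHS : (∫ r in Set.Ioc (0:ℝ) 1, ‖f r‖ ^ 2 * r)
      = ∫ r in Set.Ioc (0:ℝ) 1, ‖f' r‖ ^ 2 * r :=
    integral_congr_ae (hff'.mono fun x hx => by simp only [hx])
  have hf' : IntegrableOn (fun r : ℝ => ‖f' r‖ ^ 2 * r) (Set.Ioc (0:ℝ) 1) :=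
    hf.congr_fun_ae (hff'.mono fun x hx => by simp only [hx])
  have hT : ∀ s ∈ Set.Ioc (0:ℝ) 1, Tl l f s = Tl l f' s := by
    intro s hs
    have h1 : f =ᵐ[volume.restrict (Set.Ioc (0:ℝ) s)] f' :=
      ae_restrict_of_ae_restrict_of_subset (Set.Ioc_subset_Ioc le_rfl hs.2) hff'
    have h2 : f =ᵐ[volume.restrict (Set.Ioc s 1)] f' :=
      ae_restrict_of_ae_restrict_of_subset (Set.Ioc_subset_Ioc hs.1.le le_rfl) hff'
    unfold Tl
    rw [show (∫ r in Set.Ioc (0:ℝ) s, ((r / s : ℝ) : ℂ) ^ ((1 - l).toNat) * f r)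
          = ∫ r in Set.Ioc (0:ℝ) s, ((r / s : ℝ) : ℂ) ^ ((1 - l).toNat) * f' r from
        integral_congr_ae (h1.mono fun x hx => by simp only [hx]),
      show (∫ r in Set.Ioc s 1, ((r * s : ℝ) : ℂ) ^ ((1 - l).toNat) * f r)
          = ∫ r in Set.Ioc s 1, ((r * s : ℝ) : ℂ) ^ ((1 - l).toNat) * f' r from
        integral_congr_ae (h2.mono fun x hx => by simp only [hx])]
  have hLHS : (∫ s in Set.Ioc (0:ℝ) 1, ‖Tl l f s‖ ^ 2 * s)
      = ∫ s in Set.Ioc (0:ℝ) 1, ‖Tl l f' s‖ ^ 2 * s := by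
    refine setIntegral_congr_fun measurableSet_Ioc fun s hs => ?_
    rw [hT s hs]
  rw [hLHS, hRHS]
  exact TlAux.main_sm l hl f' hf'm hf'
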